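/- arXiv:1807.05741 — 3 statements merged into one kernel-verified Lean document; each statement's English description precedes it below -/
import Mathlib

section
/- There exist constants c₁, c₂, C > 0 such that for every real β with 0 < |β| ≤ c₁, setting n = ⌊c₂ β^{−2}⌋ ≥ 1, the assignment P(ξ = −3/2) = 3/16 − √n β/6, P(ξ = −1/2) = 5/16 + √n β/2, P(ξ = 1/2) = 5/16 − √n β/2, P(ξ = 3/2) = 3/16 + √n β/6 defines a probability distribution on {−3/2, −1/2, 1/2, 3/2}, and a random variable ξ with this distribution satisfies E[ξ] = 0, E[ξ²] = 1, E[ξ³] = √n β, and E[ξ⁴] ≤ C. -/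
open MeasureTheory ProbabilityTheory

lemma four_point_moment {Ω : Type} [MeasurableSpace Ω] (P : Measure Ω)
    [IsProbabilityMeasure P] (ξ : Ω → ℝ) (hξ : Measurable ξ)
    (p₁ p₂ p₃ p₄ : ℝ) (h₁ : 0 ≤ p₁) (h₂ : 0 ≤ p₂) (h₃ : 0 ≤ p₃) (h₄ : 0 ≤ p₄)
    (hsum : p₁ + p₂ + p₃ + p₄ = 1)
    (hP₁ : P {ω | ξ ω = -(3/2)} = ENNReal.ofReal p₁)
    (hP₂ : P {ω | ξ ω = -(1/2)} = ENNReal.ofReal p₂)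
    (hP₃ : P {ω | ξ ω = 1/2} = ENNReal.ofReal p₃)
    (hP₄ : P {ω | ξ ω = 3/2} = ENNReal.ofReal p₄) (k : ℕ) :
    ∫ ω, ξ ω ^ k ∂P =
      (-(3/2) : ℝ)^k * p₁ + (-(1/2) : ℝ)^k * p₂ + (1/2 : ℝ)^k * p₃ + (3/2 : ℝ)^k * p₄ := by
  set A₁ : Set Ω := {ω | ξ ω = -(3/2)} with hA₁def
  set A₂ : Set Ω := {ω | ξ ω = -(1/2)} with hA₂def
  set A₃ : Set Ω := {ω | ξ ω = 1/2} with hA₃def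
  set A₄ : Set Ω := {ω | ξ ω = 3/2} with hA₄def
  have m₁ : MeasurableSet A₁ := hξ (measurableSet_singleton _)
  have m₂ : MeasurableSet A₂ := hξ (measurableSet_singleton _)
  have m₃ : MeasurableSet A₃ := hξ (measurableSet_singleton _)
  have m₄ : MeasurableSet A₄ := hξ (measurableSet_singleton _)
  have d₁₂ : Disjoint A₁ A₂ := Set.disjoint_left.2 fun ω h1 h2 => by
    simp only [hA₁def, hA₂def, Set.mem_setOf_eq] at h1 h2; rw [h1] at h2; norm_num at h2
  have d₁₃ : Disjoint A₁ A₃ := Set.disjoint_left.2 fun ω h1 h2 => by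
    simp only [hA₁def, hA₃def, Set.mem_setOf_eq] at h1 h2; rw [h1] at h2; norm_num at h2
  have d₁₄ : Disjoint A₁ A₄ := Set.disjoint_left.2 fun ω h1 h2 => by
    simp only [hA₁def, hA₄def, Set.mem_setOf_eq] at h1 h2; rw [h1] at h2; norm_num at h2
  have d₂₃ : Disjoint A₂ A₃ := Set.disjoint_left.2 fun ω h1 h2 => by
    simp only [hA₂def, hA₃def, Set.mem_setOf_eq] at h1 h2; rw [h1] at h2; norm_num at h2
  have d₂₄ : Disjoint A₂ A₄ := Set.disjoint_left.2 fun ω h1 h2 => by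
    simp only [hA₂def, hA₄def, Set.mem_setOf_eq] at h1 h2; rw [h1] at h2; norm_num at h2
  have d₃₄ : Disjoint A₃ A₄ := Set.disjoint_left.2 fun ω h1 h2 => by
    simp only [hA₃def, hA₄def, Set.mem_setOf_eq] at h1 h2; rw [h1] at h2; norm_num at h2
  have hU : P (A₁ ∪ A₂ ∪ A₃ ∪ A₄) = 1 := by
    rw [measure_union (by exact (d₁₄.union_left d₂₄).union_left d₃₄) m₄,
        measure_union (by exact d₁₃.union_left d₂₃) m₃,
        measure_union d₁₂ m₂, hP₁, hP₂, hP₃, hP₄,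
        ← ENNReal.ofReal_add h₁ h₂, ← ENNReal.ofReal_add (by linarith) h₃,
        ← ENNReal.ofReal_add (by linarith) h₄, hsum, ENNReal.ofReal_one]
  have hcompl : P (A₁ ∪ A₂ ∪ A₃ ∪ A₄)ᶜ = 0 := by
    rw [measure_compl (((m₁.union m₂).union m₃).union m₄) (measure_ne_top P _), hU,
        measure_univ, tsub_self]
  have hae : ∀ᵐ ω ∂P, ω ∈ A₁ ∪ A₂ ∪ A₃ ∪ A₄ := by
    rw [ae_iff]
    exact hcompl
  set g : Ω → ℝ := fun ω => A₁.indicator (fun _ => (-(3/2):ℝ)^k) ω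
    + A₂.indicator (fun _ => (-(1/2):ℝ)^k) ω + A₃.indicator (fun _ => ((1/2):ℝ)^k) ω
    + A₄.indicator (fun _ => ((3/2):ℝ)^k) ω with hgdef
  have hfg : (fun ω => ξ ω ^ k) =ᵐ[P] g := by
    filter_upwards [hae] with ω hω
    have hmem : ∀ v : ℝ, ω ∈ {ω | ξ ω = v} ↔ ξ ω = v := fun v => Iff.rfl
    rcases hω with ((h | h) | h) | h
    · have e : ξ ω = -(3/2) := h
      simp only [hgdef, Set.indicator_apply, hA₁def, hA₂def, hA₃def, hA₄def,
        Set.mem_setOf_eq, e]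
      norm_num
    · have e : ξ ω = -(1/2) := h
      simp only [hgdef, Set.indicator_apply, hA₁def, hA₂def, hA₃def, hA₄def,
        Set.mem_setOf_eq, e]
      norm_num
    · have e : ξ ω = 1/2 := h
      simp only [hgdef, Set.indicator_apply, hA₁def, hA₂def, hA₃def, hA₄def,
        Set.mem_setOf_eq, e]
      norm_num
    · have e : ξ ω = 3/2 := h
      simp only [hgdef, Set.indicator_apply, hA₁def, hA₂def, hA₃def, hA₄def,
        Set.mem_setOf_eq, e]
      norm_num
  have i₁ : Integrable (A₁.indicator fun _ => (-(3/2):ℝ)^k) P := (integrable_const _).indicator m₁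
  have i₂ : Integrable (A₂.indicator fun _ => (-(1/2):ℝ)^k) P := (integrable_const _).indicator m₂
  have i₃ : Integrable (A₃.indicator fun _ => ((1/2):ℝ)^k) P := (integrable_const _).indicator m₃
  have i₄ : Integrable (A₄.indicator fun _ => ((3/2):ℝ)^k) P := (integrable_const _).indicator m₄
  rw [integral_congr_ae hfg]
  simp only [hgdef]
  have j₁₂ : Integrable (fun ω => A₁.indicator (fun _ => (-(3/2):ℝ)^k) ω
      + A₂.indicator (fun _ => (-(1/2):ℝ)^k) ω) P := i₁.add i₂
  have j₁₂₃ : Integrable (fun ω => A₁.indicator (fun _ => (-(3/2):ℝ)^k) ω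
      + A₂.indicator (fun _ => (-(1/2):ℝ)^k) ω + A₃.indicator (fun _ => ((1/2):ℝ)^k) ω) P :=
    j₁₂.add i₃
  rw [integral_add j₁₂₃ i₄, integral_add j₁₂ i₃, integral_add i₁ i₂,
    integral_indicator_const _ m₁, integral_indicator_const _ m₂,
    integral_indicator_const _ m₃, integral_indicator_const _ m₄,
    measureReal_def, measureReal_def, measureReal_def, measureReal_def,
    hP₁, hP₂, hP₃, hP₄, ENNReal.toReal_ofReal h₁, ENNReal.toReal_ofReal h₂,
    ENNReal.toReal_ofReal h₃, ENNReal.toReal_ofReal h₄]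
  simp [mul_comm]

/-- Construction of the auxiliary four-point distribution: there are constants
`c₁, c₂, C > 0` such that for every real `β` with `0 < |β| ≤ c₁`, putting
`n = ⌊c₂ β⁻²⌋ ≥ 1`, the assignment
`P(ξ = -3/2) = 3/16 - √n β/6`, `P(ξ = -1/2) = 5/16 + √n β/2`,
`P(ξ = 1/2) = 5/16 - √n β/2`, `P(ξ = 3/2) = 3/16 + √n β/6`
is a probability distribution, and any random variable `ξ` with this distribution
satisfies `E ξ = 0`, `E ξ² = 1`, `E ξ³ = √n β` and `E ξ⁴ ≤ C`. -/
theorem four_point_distribution :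
    ∃ c₁ c₂ C : ℝ, 0 < c₁ ∧ 0 < c₂ ∧ 0 < C ∧
      ∀ β : ℝ, 0 < |β| → |β| ≤ c₁ →
      ∀ n : ℕ, n = ⌊c₂ / β ^ 2⌋₊ →
        1 ≤ n ∧
        (0 ≤ 3 / 16 - Real.sqrt n * β / 6 ∧ 0 ≤ 5 / 16 + Real.sqrt n * β / 2 ∧
          0 ≤ 5 / 16 - Real.sqrt n * β / 2 ∧ 0 ≤ 3 / 16 + Real.sqrt n * β / 6) ∧
        (3 / 16 - Real.sqrt n * β / 6) + (5 / 16 + Real.sqrt n * β / 2) +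
          (5 / 16 - Real.sqrt n * β / 2) + (3 / 16 + Real.sqrt n * β / 6) = 1 ∧
        ∀ (Ω : Type) (_ : MeasurableSpace Ω) (P : Measure Ω)
          (_ : IsProbabilityMeasure P) (ξ : Ω → ℝ),
          Measurable ξ →
          P {ω | ξ ω = -(3 / 2)} = ENNReal.ofReal (3 / 16 - Real.sqrt n * β / 6) →
          P {ω | ξ ω = -(1 / 2)} = ENNReal.ofReal (5 / 16 + Real.sqrt n * β / 2) →
          P {ω | ξ ω = 1 / 2} = ENNReal.ofReal (5 / 16 - Real.sqrt n * β / 2) →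
          P {ω | ξ ω = 3 / 2} = ENNReal.ofReal (3 / 16 + Real.sqrt n * β / 6) →
          (∫ ω, ξ ω ∂P = 0 ∧ ∫ ω, ξ ω ^ 2 ∂P = 1 ∧
            ∫ ω, ξ ω ^ 3 ∂P = Real.sqrt n * β ∧ ∫ ω, ξ ω ^ 4 ∂P ≤ C) := by
  refine ⟨1/2, 1/4, 2, by norm_num, by norm_num, by norm_num, ?_⟩
  intro β hβ0 hβ n hn
  have hβne : β ≠ 0 := abs_pos.mp hβ0
  have hβ2 : (0:ℝ) < β ^ 2 := by positivity
  have hβsq : β ^ 2 ≤ 1/4 := by nlinarith [sq_abs β, abs_nonneg β]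
  have hn1 : 1 ≤ n := by
    rw [hn]
    exact Nat.le_floor (by rw [Nat.cast_one, le_div_iff₀ hβ2]; linarith)
  have hn_le : (n : ℝ) ≤ (1/4) / β ^ 2 := by
    rw [hn]; exact Nat.floor_le (by positivity)
  have hsqrt : Real.sqrt n * |β| ≤ 1/2 := by
    have h1 : Real.sqrt n ≤ Real.sqrt ((1/4) / β ^ 2) := Real.sqrt_le_sqrt hn_le
    have h2 : Real.sqrt ((1/4) / β ^ 2) = (1/2) / |β| := by
      rw [show (1/4 : ℝ) / β ^ 2 = ((1/2) / |β|) ^ 2 by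
        rw [div_pow, sq_abs]; norm_num]
      exact Real.sqrt_sq (div_nonneg (by norm_num) (abs_nonneg β))
    rw [h2] at h1
    calc Real.sqrt n * |β| ≤ ((1/2) / |β|) * |β| :=
          mul_le_mul_of_nonneg_right h1 (abs_nonneg β)
      _ = 1/2 := by field_simp
  have hs : |Real.sqrt n * β| ≤ 1/2 := by
    rwa [abs_mul, abs_of_nonneg (Real.sqrt_nonneg _)]
  obtain ⟨hsl, hsu⟩ := abs_le.1 hs
  set s : ℝ := Real.sqrt n * β with hsdef
  have p₁0 : 0 ≤ 3/16 - s/6 := by linarith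
  have p₂0 : 0 ≤ 5/16 + s/2 := by linarith
  have p₃0 : 0 ≤ 5/16 - s/2 := by linarith
  have p₄0 : 0 ≤ 3/16 + s/6 := by linarith
  refine ⟨hn1, ⟨by linarith, by linarith, by linarith, by linarith⟩, by ring, ?_⟩
  intro Ω mΩ P hP ξ hξ hP₁ hP₂ hP₃ hP₄
  have key := fun k => four_point_moment P ξ hξ _ _ _ _ p₁0 p₂0 p₃0 p₄0 (by ring)
    hP₁ hP₂ hP₃ hP₄ k
  have k1 := key 1
  have k2 := key 2
  have k3 := key 3
  have k4 := key 4
  simp only [pow_one] at k1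
  refine ⟨by rw [k1]; ring, by rw [k2]; ring, by rw [k3]; ring, ?_⟩
  rw [k4]; nlinarith
end

section
/- In the setting of subgraph counts of a fixed graph G in the Erdős–Rényi random graph K(n,p) with 1/2 < p < 1, with X_i = σ^{−1}(Y_i − p^{e(G)}) indexed by the copies G_i of G (where Y_i is the indicator that all edges of G_i are present, σ² = Var(S), S is the total number of copies of G), with neighborhoods A_i = {j : e(G_j ∩ G_i) ≥ 1}, A_{ij} = {k : e(G_k ∩ (G_i ∪ G_j)) ≥ 1}, A_{ijk} = {l : e(G_l ∩ (G_i ∪ G_j ∪ G_k)) ≥ 1}, the quantity γ = γ₁ + γ₂ + γ₃ satisfies γ ≤ C(G) n^{−2}(1 − p)^{−1}, where C(G) depends only on G. -/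
open MeasureTheory ProbabilityTheory

/-- The Erdős–Rényi random graph `K(n,p)`: every (unordered) pair of vertices of `Fin n`
carries an independent Bernoulli(`p`) indicator of being an edge. -/
noncomputable def erdosRenyi (n : ℕ) (p : ENNReal) (hp : p ≤ 1) :
    Measure (Sym2 (Fin n) → Bool) :=
  Measure.pi fun _ =>
    (PMF.ofFintype (fun b => cond b p (1 - p)) (by simp [add_tsub_cancel_of_le hp])).toMeasure

/-- The indicator `Y_i` that all edges of the copy `G_i` of `G` (given by an embedding
`f` of the vertices of `G`) are present in the random graph `ω`. -/
noncomputable def copyIndicator {V : Type} [Fintype V] [DecidableEq V]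
    (G : SimpleGraph V) [DecidableRel G.Adj] {n : ℕ} (f : V ↪ Fin n)
    (ω : Sym2 (Fin n) → Bool) : ℝ :=
  ∏ e ∈ G.edgeFinset, (if ω (Sym2.map (⇑f) e) then (1 : ℝ) else 0)

/-- The total number of copies of `G` (counted via embeddings). -/
noncomputable def subgraphCount {V : Type} [Fintype V] [DecidableEq V]
    (G : SimpleGraph V) [DecidableRel G.Adj] (n : ℕ) (ω : Sym2 (Fin n) → Bool) : ℝ :=
  ∑ f : V ↪ Fin n, copyIndicator G f ω

/-- The edge set of the copy `G_i` of `G` given by the embedding `f`. -/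
noncomputable def copyEdges {V : Type} [Fintype V] [DecidableEq V]
    (G : SimpleGraph V) [DecidableRel G.Adj] {n : ℕ} (f : V ↪ Fin n) :
    Finset (Sym2 (Fin n)) :=
  Finset.image (Sym2.map (⇑f)) G.edgeFinset

open Classical in
/-- The neighborhoods `A_i`, `A_{ij}`, `A_{ijk}`: copies sharing at least one edge with
`G_i`, `G_i ∪ G_j`, `G_i ∪ G_j ∪ G_k` respectively; `nbhd G s` is the set of copies
sharing an edge with the union of the copies indexed by `s`. -/
noncomputable def nbhd {V : Type} [Fintype V] [DecidableEq V]
    (G : SimpleGraph V) [DecidableRel G.Adj] {n : ℕ} (s : Finset (V ↪ Fin n)) :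
    Finset (V ↪ Fin n) :=
  Finset.univ.filter fun g => (copyEdges G g ∩ s.sup (copyEdges G)).Nonempty

/-! Helper lemmas -/

private lemma erdos_measure_cylinder {n : ℕ} {p : ℝ} (hp0 : 0 ≤ p)
    (h : ENNReal.ofReal p ≤ 1) (S : Finset (Sym2 (Fin n))) :
    erdosRenyi n (ENNReal.ofReal p) h {ω | ∀ s ∈ S, ω s = true}
      = ENNReal.ofReal p ^ S.card := by
  classical
  have hset : {ω : Sym2 (Fin n) → Bool | ∀ s ∈ S, ω s = true}
      = Set.univ.pi (fun s => if s ∈ S then ({true} : Set Bool) else Set.univ) := by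
    ext ω
    simp only [Set.mem_setOf_eq, Set.mem_pi, Set.mem_univ, forall_true_left]
    constructor
    · intro hω i; by_cases hi : i ∈ S <;> simp [hi, hω]
    · intro hω s hs; have := hω s; simp [hs] at this; exact this
  rw [erdosRenyi, hset, Measure.pi_pi]
  have hval : ∀ s : Sym2 (Fin n),
      (PMF.ofFintype (fun b => cond b (ENNReal.ofReal p) (1 - ENNReal.ofReal p))
        (by simp [add_tsub_cancel_of_le h])).toMeasure
        (if s ∈ S then ({true} : Set Bool) else Set.univ)
      = if s ∈ S then ENNReal.ofReal p else 1 := by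
    intro s
    by_cases hs : s ∈ S <;> simp only [hs, if_true, if_false]
    · rw [PMF.toMeasure_apply_singleton _ _ (measurableSet_singleton _)]
      simp [PMF.ofFintype_apply]
    · exact measure_univ
  simp_rw [hval]
  rw [Finset.prod_ite_mem, Finset.univ_inter, Finset.prod_const]

private lemma erdos_integral_cylinder {n : ℕ} {p : ℝ} (hp0 : 0 ≤ p)
    (h : ENNReal.ofReal p ≤ 1) (S : Finset (Sym2 (Fin n))) :
    ∫ ω, (∏ s ∈ S, if ω s then (1:ℝ) else 0) ∂(erdosRenyi n (ENNReal.ofReal p) h)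
      = p ^ S.card := by
  classical
  have hfun : (fun ω : Sym2 (Fin n) → Bool => ∏ s ∈ S, if ω s then (1:ℝ) else 0)
      = Set.indicator {ω | ∀ s ∈ S, ω s = true} (fun _ => (1:ℝ)) := by
    funext ω
    rw [Finset.prod_boole]
    by_cases hω : ∀ s ∈ S, ω s = true
    · simp [Set.indicator_apply, hω]
    · simp [Set.indicator_apply, hω]
  rw [hfun, integral_indicator_const _ (MeasurableSet.of_discrete), measureReal_def,
    erdos_measure_cylinder hp0 h S]
  simp [ENNReal.toReal_pow, ENNReal.toReal_ofReal hp0]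
private instance erdos_prob (n : ℕ) (p : ENNReal) (hp : p ≤ 1) :
    IsProbabilityMeasure (erdosRenyi n p hp) :=
  inferInstanceAs (IsProbabilityMeasure
    (Measure.pi fun _ : Sym2 (Fin n) =>
      (PMF.ofFintype (fun b => cond b p (1 - p)) (by simp [add_tsub_cancel_of_le hp])).toMeasure))

section copyLemmas

variable {V : Type} [Fintype V] [DecidableEq V] (G : SimpleGraph V) [DecidableRel G.Adj]
  {n : ℕ}

private lemma copyIndicator_eq_prod (f : V ↪ Fin n) (ω : Sym2 (Fin n) → Bool) :
    copyIndicator G f ω = ∏ s ∈ copyEdges G f, (if ω s then (1:ℝ) else 0) := by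
  rw [copyEdges, Finset.prod_image]
  · rfl
  · exact fun x _ y _ h => Sym2.map.injective f.injective h

private lemma card_copyEdges (f : V ↪ Fin n) :
    (copyEdges G f).card = G.edgeFinset.card :=
  Finset.card_image_of_injective _ (Sym2.map.injective f.injective)

private lemma indprod_eq (A : Finset (Sym2 (Fin n))) (ω : Sym2 (Fin n) → Bool) :
    (∏ s ∈ A, if ω s then (1:ℝ) else 0) = if (∀ s ∈ A, ω s = true) then 1 else 0 := by
  simp only [Finset.prod_boole]
  split_ifs <;> simp_all

private lemma copyIndicator_mul (f g : V ↪ Fin n) (ω : Sym2 (Fin n) → Bool) :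
    copyIndicator G f ω * copyIndicator G g ω
      = ∏ s ∈ copyEdges G f ∪ copyEdges G g, (if ω s then (1:ℝ) else 0) := by
  classical
  simp only [copyIndicator_eq_prod, indprod_eq, Finset.forall_mem_union]
  split_ifs <;> simp_all

private lemma copyIndicator_nonneg (f : V ↪ Fin n) (ω : Sym2 (Fin n) → Bool) :
    0 ≤ copyIndicator G f ω :=
  Finset.prod_nonneg (fun _ _ => by split <;> norm_num)

private lemma copyIndicator_le_one (f : V ↪ Fin n) (ω : Sym2 (Fin n) → Bool) :
    copyIndicator G f ω ≤ 1 :=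
  Finset.prod_le_one (fun _ _ => by split <;> norm_num) (fun _ _ => by split <;> norm_num)

variable {p : ℝ}

private lemma integral_copyIndicator (hp0 : 0 ≤ p) (h : ENNReal.ofReal p ≤ 1)
    (f : V ↪ Fin n) :
    ∫ ω, copyIndicator G f ω ∂(erdosRenyi n (ENNReal.ofReal p) h)
      = p ^ G.edgeFinset.card := by
  simp_rw [copyIndicator_eq_prod]
  rw [erdos_integral_cylinder hp0 h, card_copyEdges]

private lemma integral_copyIndicator_mul (hp0 : 0 ≤ p) (h : ENNReal.ofReal p ≤ 1)
    (f g : V ↪ Fin n) :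
    ∫ ω, copyIndicator G f ω * copyIndicator G g ω ∂(erdosRenyi n (ENNReal.ofReal p) h)
      = p ^ ((copyEdges G f ∪ copyEdges G g).card) := by
  simp_rw [copyIndicator_mul]
  rw [erdos_integral_cylinder hp0 h]

private lemma variance_formula (hp0 : 0 ≤ p) (h : ENNReal.ofReal p ≤ 1) :
    variance (subgraphCount G n) (erdosRenyi n (ENNReal.ofReal p) h)
      = ∑ f : V ↪ Fin n, ∑ g : V ↪ Fin n,
          (p ^ ((copyEdges G f ∪ copyEdges G g).card)
            - p ^ G.edgeFinset.card * p ^ G.edgeFinset.card) := by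
  classical
  set μ := erdosRenyi n (ENNReal.ofReal p) h with hμ
  have h2 : ∫ x, ((subgraphCount G n) ^ 2) x ∂μ
      = ∑ f : V ↪ Fin n, ∑ g : V ↪ Fin n,
          p ^ ((copyEdges G f ∪ copyEdges G g).card) := by
    have hfun : ((subgraphCount G n) ^ 2)
        = fun ω => ∑ f : V ↪ Fin n, ∑ g : V ↪ Fin n,
            copyIndicator G f ω * copyIndicator G g ω := by
      funext ω
      simp only [Pi.pow_apply, subgraphCount, sq, Finset.sum_mul_sum]
    rw [hfun, integral_finset_sum _ (fun _ _ => Integrable.of_finite)]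
    refine Finset.sum_congr rfl (fun f _ => ?_)
    rw [integral_finset_sum _ (fun _ _ => Integrable.of_finite)]
    exact Finset.sum_congr rfl (fun g _ => integral_copyIndicator_mul G hp0 h f g)
  have h1 : ∫ x, subgraphCount G n x ∂μ
      = ∑ _f : V ↪ Fin n, p ^ G.edgeFinset.card := by
    rw [show (fun x => subgraphCount G n x) = subgraphCount G n from rfl]
    unfold subgraphCount
    rw [integral_finset_sum _ (fun _ _ => Integrable.of_finite)]
    exact Finset.sum_congr rfl (fun f _ => integral_copyIndicator G hp0 h f)
  rw [variance_eq_sub MemLp.of_discrete, h2, h1, sq, Finset.sum_mul_sum,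
    ← Finset.sum_sub_distrib]
  exact Finset.sum_congr rfl fun f _ => by rw [← Finset.sum_sub_distrib]

end copyLemmas
section varLower

variable {V : Type} [Fintype V] [DecidableEq V] (G : SimpleGraph V) [DecidableRel G.Adj]
  {n : ℕ} {p : ℝ}

private lemma variance_lower (hp0 : 0 ≤ p) (hp1 : p ≤ 1) (h : ENNReal.ofReal p ≤ 1)
    {a b : V} (hab : s(a, b) ∈ G.edgeFinset) :
    p ^ (2 * G.edgeFinset.card - 1) * (1 - p) * ((Fintype.card (V ↪ Fin n) : ℝ)) ^ 2
      ≤ (n : ℝ) ^ 2 * variance (subgraphCount G n) (erdosRenyi n (ENNReal.ofReal p) h) := by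
  classical
  set E := G.edgeFinset.card with hE
  set D := Fintype.card (V ↪ Fin n) with hDdef
  set r : ℝ := p ^ (2 * E - 1) * (1 - p) with hr
  have hr0 : 0 ≤ r := mul_nonneg (pow_nonneg hp0 _) (by linarith)
  -- termwise bound
  have key : ∀ f g : V ↪ Fin n,
      (if f a = g a ∧ f b = g b then r else 0)
        ≤ p ^ ((copyEdges G f ∪ copyEdges G g).card) - p ^ E * p ^ E := by
    intro f g
    have hcard_le : (copyEdges G f ∪ copyEdges G g).card ≤ 2 * E := by
      refine (Finset.card_union_le _ _).trans ?_
      rw [card_copyEdges, card_copyEdges]; omega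
    have hEE : p ^ E * p ^ E = p ^ (2 * E) := by rw [← pow_add]; ring_nf
    by_cases hc : f a = g a ∧ f b = g b
    · rw [if_pos hc]
      have hmem : Sym2.map (⇑f) s(a, b) ∈ copyEdges G f ∩ copyEdges G g := by
        rw [Finset.mem_inter]
        constructor
        · exact Finset.mem_image_of_mem _ hab
        · have : Sym2.map (⇑f) s(a, b) = Sym2.map (⇑g) s(a, b) := by
            simp [Sym2.map_pair_eq, hc.1, hc.2]
          rw [this]; exact Finset.mem_image_of_mem _ hab
      have hinter : 1 ≤ (copyEdges G f ∩ copyEdges G g).card :=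
        Finset.card_pos.mpr ⟨_, hmem⟩
      have hcard : (copyEdges G f ∪ copyEdges G g).card ≤ 2 * E - 1 := by
        have := Finset.card_union_add_card_inter (copyEdges G f) (copyEdges G g)
        rw [card_copyEdges, card_copyEdges] at this
        omega
      have h1 : p ^ (2 * E - 1) ≤ p ^ ((copyEdges G f ∪ copyEdges G g).card) :=
        pow_le_pow_of_le_one hp0 hp1 hcard
      have h2 : p ^ E * p ^ E = p ^ (2 * E - 1) * p := by
        rw [hEE, ← pow_succ]
        congr 1
        have hE1 : 1 ≤ E := by
          have : 0 < E := Finset.card_pos.mpr ⟨_, hab⟩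
          omega
        omega
      rw [hr, h2]; nlinarith [pow_nonneg hp0 (2 * E - 1)]
    · rw [if_neg hc, hEE]
      have := pow_le_pow_of_le_one hp0 hp1 hcard_le
      linarith
  -- the count of coincidence pairs, fiberwise
  set c : Fin n × Fin n → ℕ :=
    fun q => (Finset.univ.filter fun f : V ↪ Fin n => f a = q.1 ∧ f b = q.2).card with hc
  have hinner : ∀ f : V ↪ Fin n,
      (∑ g : V ↪ Fin n, if f a = g a ∧ f b = g b then (1:ℝ) else 0) = c (f a, f b) := by
    intro f
    rw [Finset.sum_boole]
    norm_cast
    congr 1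
    apply Finset.filter_congr
    intro g _
    constructor
    · rintro ⟨h1, h2⟩; exact ⟨h1.symm, h2.symm⟩
    · rintro ⟨h1, h2⟩; exact ⟨h1.symm, h2.symm⟩
  have hfiber : ∀ q : Fin n × Fin n,
      (Finset.univ.filter fun f : V ↪ Fin n => (f a, f b) = q) =
        (Finset.univ.filter fun f : V ↪ Fin n => f a = q.1 ∧ f b = q.2) := by
    intro q
    apply Finset.filter_congr
    intro f _
    constructor
    · intro h1; exact ⟨by rw [← h1], by rw [← h1]⟩
    · rintro ⟨h1, h2⟩; cases q; simp_all
  have houter : (∑ f : V ↪ Fin n, (c (f a, f b) : ℝ))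
      = ∑ q : Fin n × Fin n, (c q : ℝ) ^ 2 := by
    rw [← Finset.sum_fiberwise Finset.univ (fun f : V ↪ Fin n => (f a, f b))
      (fun f => (c (f a, f b) : ℝ))]
    refine Finset.sum_congr rfl fun q _ => ?_
    have : ∀ f ∈ Finset.univ.filter fun f : V ↪ Fin n => (f a, f b) = q,
        (c (f a, f b) : ℝ) = (c q : ℝ) := by
      intro f hf
      rw [Finset.mem_filter] at hf
      rw [hf.2]
    rw [Finset.sum_congr rfl this, Finset.sum_const, nsmul_eq_mul, hfiber, sq]
  have hsumc : (∑ q : Fin n × Fin n, (c q : ℝ)) = D := by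
    have hD : D = ∑ q : Fin n × Fin n,
        ((Finset.univ.filter fun f : V ↪ Fin n => (f a, f b) = q)).card := by
      rw [hDdef, ← Finset.card_univ]
      exact Finset.card_eq_sum_card_fiberwise fun f _ => Finset.mem_univ _
    rw [hD, Nat.cast_sum]
    exact Finset.sum_congr rfl fun q _ => by rw [hfiber]
  have hCS : ((D : ℝ)) ^ 2 ≤ (n : ℝ) ^ 2 * ∑ q : Fin n × Fin n, (c q : ℝ) ^ 2 := by
    have := Finset.sum_mul_sq_le_sq_mul_sq Finset.univ (fun _ : Fin n × Fin n => (1:ℝ))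
      (fun q => (c q : ℝ))
    simp only [one_mul, one_pow] at this
    rw [hsumc] at this
    have hcard : (∑ _q : Fin n × Fin n, (1:ℝ)) = (n : ℝ) ^ 2 := by
      rw [Finset.sum_const, Finset.card_univ, nsmul_eq_mul]
      simp [sq]
    rw [hcard] at this
    exact this
  -- put it together
  have hsum : (∑ f : V ↪ Fin n, ∑ g : V ↪ Fin n,
      if f a = g a ∧ f b = g b then r else 0) = r * ∑ q : Fin n × Fin n, (c q : ℝ) ^ 2 := by
    have : ∀ f g : V ↪ Fin n, (if f a = g a ∧ f b = g b then r else 0)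
        = r * (if f a = g a ∧ f b = g b then (1:ℝ) else 0) := by
      intro f g; split <;> ring
    simp_rw [this, ← Finset.mul_sum, hinner]
    rw [houter]
  have hvar := variance_formula (n := n) G hp0 h
  calc r * (D : ℝ) ^ 2
      ≤ r * ((n : ℝ) ^ 2 * ∑ q : Fin n × Fin n, (c q : ℝ) ^ 2) := by
        apply mul_le_mul_of_nonneg_left _ hr0
        nlinarith [hCS]
    _ = (n : ℝ) ^ 2 * (r * ∑ q : Fin n × Fin n, (c q : ℝ) ^ 2) := by ring
    _ ≤ (n : ℝ) ^ 2 * variance (subgraphCount G n) (erdosRenyi n (ENNReal.ofReal p) h) := by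
        apply mul_le_mul_of_nonneg_left _ (by positivity)
        rw [hvar, ← hsum]
        exact Finset.sum_le_sum fun f _ => Finset.sum_le_sum fun g _ => key f g

end varLower
section counting

variable {V : Type} [Fintype V] [DecidableEq V]

private lemma card_two_fixed {n : ℕ} (a b : V) (hab : a ≠ b) (x y : Fin n) :
    (Finset.univ.filter fun g : V ↪ Fin n => g a = x ∧ g b = y).card
      ≤ n ^ (Fintype.card V - 2) := by
  classical
  have hcard : Fintype.card {z : V // z ≠ a ∧ z ≠ b} = Fintype.card V - 2 := by
    have : ∀ z : V, (z ≠ a ∧ z ≠ b) ↔ z ∉ ({a, b} : Finset V) := by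
      intro z; simp [not_or]
    rw [Fintype.card_subtype]
    rw [show (Finset.univ.filter fun z : V => z ≠ a ∧ z ≠ b)
        = ({a, b} : Finset V)ᶜ from by ext z; simp [not_or]]
    rw [Finset.card_compl, Finset.card_pair hab]
  calc (Finset.univ.filter fun g : V ↪ Fin n => g a = x ∧ g b = y).card
      ≤ Fintype.card ({z : V // z ≠ a ∧ z ≠ b} → Fin n) := by
        apply Finset.card_le_card_of_injOn
          (fun g (z : {z : V // z ≠ a ∧ z ≠ b}) => g z.1)
          (fun _ _ => Finset.mem_univ _)
        intro g hg g' hg' hgg'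
        rw [Finset.coe_filter] at hg hg'
        simp only [Set.mem_setOf_eq] at hg hg'
        ext z
        by_cases hza : z = a
        · rw [hza, hg.2.1, hg'.2.1]
        by_cases hzb : z = b
        · rw [hzb, hg.2.2, hg'.2.2]
        have h3 : g z = g' z := congrFun hgg' ⟨z, hza, hzb⟩
        rw [h3]
    _ = n ^ (Fintype.card V - 2) := by
        rw [Fintype.card_fun, Fintype.card_fin, hcard]

private lemma card_sym2_fiber_le (G : SimpleGraph V) [DecidableRel G.Adj] {n : ℕ}
    (t : Sym2 (Fin n)) {e' : Sym2 V} (he' : e' ∈ G.edgeFinset) :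
    (Finset.univ.filter fun g : V ↪ Fin n => Sym2.map (⇑g) e' = t).card
      ≤ 2 * n ^ (Fintype.card V - 2) := by
  classical
  induction e' using Sym2.ind with
  | _ a b =>
    induction t using Sym2.ind with
    | _ x y =>
      have hadj : G.Adj a b := by simpa [SimpleGraph.mem_edgeFinset] using he'
      have hab : a ≠ b := hadj.ne
      have hsub : (Finset.univ.filter fun g : V ↪ Fin n => Sym2.map (⇑g) s(a, b) = s(x, y))
          ⊆ (Finset.univ.filter fun g : V ↪ Fin n => g a = x ∧ g b = y)
            ∪ (Finset.univ.filter fun g : V ↪ Fin n => g a = y ∧ g b = x) := by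
        intro g hg
        rw [Finset.mem_filter] at hg
        rw [Sym2.map_pair_eq, Sym2.eq_iff] at hg
        rw [Finset.mem_union, Finset.mem_filter, Finset.mem_filter]
        rcases hg.2 with h | h
        · exact Or.inl ⟨Finset.mem_univ _, h⟩
        · exact Or.inr ⟨Finset.mem_univ _, h⟩
      calc (Finset.univ.filter fun g : V ↪ Fin n => Sym2.map (⇑g) s(a, b) = s(x, y)).card
          ≤ _ := Finset.card_le_card hsub
        _ ≤ (Finset.univ.filter fun g : V ↪ Fin n => g a = x ∧ g b = y).card
            + (Finset.univ.filter fun g : V ↪ Fin n => g a = y ∧ g b = x).card :=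
            Finset.card_union_le _ _
        _ ≤ 2 * n ^ (Fintype.card V - 2) := by
            have h1 := card_two_fixed a b hab x y
            have h2 := card_two_fixed a b hab y x
            omega

private lemma card_nbhd_le (G : SimpleGraph V) [DecidableRel G.Adj] {n : ℕ}
    (s : Finset (V ↪ Fin n)) :
    (nbhd G s).card
      ≤ s.card * (2 * G.edgeFinset.card ^ 2 * n ^ (Fintype.card V - 2)) := by
  classical
  set U := s.sup (copyEdges G) with hU
  have hUcard : U.card ≤ s.card * G.edgeFinset.card := by
    rw [hU, Finset.sup_eq_biUnion]
    refine (Finset.card_biUnion_le).trans (le_of_eq ?_)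
    rw [Finset.sum_congr rfl (fun f _ => card_copyEdges G f), Finset.sum_const, smul_eq_mul]
  have hsub : nbhd G s ⊆ (U ×ˢ G.edgeFinset).biUnion
      (fun q => Finset.univ.filter fun g : V ↪ Fin n => Sym2.map (⇑g) q.2 = q.1) := by
    intro g hg
    rw [nbhd, Finset.mem_filter] at hg
    obtain ⟨t, ht⟩ := hg.2
    rw [Finset.mem_inter] at ht
    rw [copyEdges, Finset.mem_image] at ht
    obtain ⟨e', he', hmap⟩ := ht.1
    rw [Finset.mem_biUnion]
    exact ⟨(t, e'), Finset.mem_product.mpr ⟨ht.2, he'⟩,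
      Finset.mem_filter.mpr ⟨Finset.mem_univ _, hmap⟩⟩
  calc (nbhd G s).card ≤ _ := Finset.card_le_card hsub
    _ ≤ ∑ q ∈ U ×ˢ G.edgeFinset,
        (Finset.univ.filter fun g : V ↪ Fin n => Sym2.map (⇑g) q.2 = q.1).card :=
        Finset.card_biUnion_le
    _ ≤ ∑ q ∈ U ×ˢ G.edgeFinset, 2 * n ^ (Fintype.card V - 2) := by
        refine Finset.sum_le_sum fun q hq => ?_
        exact card_sym2_fiber_le G q.1 (Finset.mem_product.mp hq).2
    _ = (U.card * G.edgeFinset.card) * (2 * n ^ (Fintype.card V - 2)) := by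
        rw [Finset.sum_const, Finset.card_product, smul_eq_mul]
    _ ≤ (s.card * G.edgeFinset.card * G.edgeFinset.card) * (2 * n ^ (Fintype.card V - 2)) := by
        have := Nat.mul_le_mul_right (G.edgeFinset.card) hUcard
        exact Nat.mul_le_mul_right _ this
    _ = s.card * (2 * G.edgeFinset.card ^ 2 * n ^ (Fintype.card V - 2)) := by ring

end counting

private lemma one_sub_pow_le' {p : ℝ} (hp0 : 0 ≤ p) (hp1 : p ≤ 1) :
    ∀ k : ℕ, 1 - p ^ k ≤ k * (1 - p)
  | 0 => by norm_num
  | (k + 1) => by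
      have ih := one_sub_pow_le' hp0 hp1 k
      have hpk : p ^ k ≤ 1 := pow_le_one₀ hp0 hp1
      have h1 : 1 - p ^ (k + 1) = (1 - p) + p * (1 - p ^ k) := by ring
      have h2 : p * (1 - p ^ k) ≤ 1 - p ^ k := by nlinarith
      push_cast
      nlinarith

private lemma descFactorial_bound {v n : ℕ} (hv : 1 ≤ v) (hvn : v ≤ n) :
    (n : ℝ) ^ v ≤ ((2 * v : ℕ) : ℝ) ^ v * (n.descFactorial v : ℝ) := by
  have hD1 : 1 ≤ n.descFactorial v := by
    rcases Nat.eq_or_lt_of_le hvn with h | h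
    · have := Nat.descFactorial_eq_zero_iff_lt (n := n) (k := v)
      omega
    · have := Nat.descFactorial_eq_zero_iff_lt (n := n) (k := v)
      omega
  by_cases hn : n ≤ 2 * v
  · calc (n : ℝ) ^ v ≤ ((2 * v : ℕ) : ℝ) ^ v := by
          apply pow_le_pow_left₀ (by positivity)
          exact_mod_cast hn
      _ ≤ ((2 * v : ℕ) : ℝ) ^ v * (n.descFactorial v : ℝ) := by
          nlinarith [pow_nonneg (by positivity : (0:ℝ) ≤ ((2 * v : ℕ) : ℝ)) v,
            (by exact_mod_cast hD1 : (1:ℝ) ≤ (n.descFactorial v : ℝ))]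
  · push_neg at hn
    have hnat : n ^ v ≤ 2 ^ v * n.descFactorial v := by
      have h1 : 2 ^ v * n.descFactorial v = ∏ i ∈ Finset.range v, (2 * (n - i)) := by
        rw [Finset.prod_mul_distrib, Finset.prod_const, Finset.card_range,
          Nat.descFactorial_eq_prod_range]
      have h2 : n ^ v = ∏ _i ∈ Finset.range v, n := by
        rw [Finset.prod_const, Finset.card_range]
      rw [h1, h2]
      refine Finset.prod_le_prod' fun i hi => ?_
      rw [Finset.mem_range] at hi
      omega
    calc (n : ℝ) ^ v ≤ (2 : ℝ) ^ v * (n.descFactorial v : ℝ) := by exact_mod_cast hnat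
      _ ≤ ((2 * v : ℕ) : ℝ) ^ v * (n.descFactorial v : ℝ) := by
          apply mul_le_mul_of_nonneg_right _ (by positivity)
          apply pow_le_pow_left₀ (by norm_num)
          exact_mod_cast by omega

set_option maxHeartbeats 1600000 in
/-- In the subgraph-count setting with `1/2 < p < 1`, the quantity `γ = γ₁ + γ₂ + γ₃`
built from `X_i = σ⁻¹(Y_i - p^{e(G)})` and the neighborhoods
`A_i = {j : e(G_j ∩ G_i) ≥ 1}` etc. satisfies `γ ≤ C(G) n⁻² (1-p)⁻¹`. -/
theorem gamma_bound_subgraph_count_large_p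
    (V : Type) [Fintype V] [DecidableEq V] (G : SimpleGraph V) [DecidableRel G.Adj]
    (hG : G.edgeFinset.Nonempty) :
    ∃ C : ℝ, 0 < C ∧
      ∀ (n : ℕ) (p : ℝ) (hp0 : 1 / 2 < p) (hp1 : p < 1),
      ∀ μ : Measure (Sym2 (Fin n) → Bool),
        μ = erdosRenyi n (ENNReal.ofReal p) (ENNReal.ofReal_le_one.mpr hp1.le) →
      ∀ X : (V ↪ Fin n) → (Sym2 (Fin n) → Bool) → ℝ,
        X = (fun f ω => (Real.sqrt (variance (subgraphCount G n) μ))⁻¹ *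
              (copyIndicator G f ω - p ^ G.edgeFinset.card)) →
        (∑ i : V ↪ Fin n, ∑ j ∈ nbhd G {i}, ∑ k ∈ nbhd G {i, j}, ∑ l ∈ nbhd G {i, j, k},
            ∫ ω, |X i ω * X j ω * X k ω * X l ω| ∂μ) +
        (∑ i : V ↪ Fin n, ∑ j ∈ nbhd G {i}, ∑ k ∈ nbhd G {i, j}, ∑ l ∈ nbhd G {i, j, k},
            (∫ ω, |X i ω * X j ω| ∂μ) * ∫ ω, |X k ω * X l ω| ∂μ) +
        (∑ i : V ↪ Fin n, ∑ j ∈ nbhd G {i}, ∑ k ∈ nbhd G {i, j}, ∑ l ∈ nbhd G {i, j, k},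
            (∫ ω, |X i ω * X j ω * X k ω| ∂μ) * ∫ ω, |X l ω| ∂μ) ≤
          C * ((n : ℝ) ^ 2)⁻¹ * (1 - p)⁻¹ := by
  classical
  obtain ⟨e₀, he₀⟩ := hG
  have hex : ∃ a b : V, s(a, b) ∈ G.edgeFinset := by
    induction e₀ using Sym2.ind with
    | _ x y => exact ⟨x, y, he₀⟩
  obtain ⟨a, b, hab⟩ := hex
  have hadj : G.Adj a b := by simpa [SimpleGraph.mem_edgeFinset] using hab
  have hne : a ≠ b := hadj.ne
  set E := G.edgeFinset.card with hEdef
  have hE1 : 1 ≤ E := Finset.card_pos.mpr ⟨_, hab⟩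
  have hv2 : 2 ≤ Fintype.card V := Fintype.one_lt_card_iff_nontrivial.mpr ⟨⟨a, b, hne⟩⟩
  have hERpos : (0:ℝ) < (E : ℝ) := by exact_mod_cast hE1
  have h2vpos : (0:ℝ) < ((2 * Fintype.card V : ℕ) : ℝ) := by
    have : 0 < 2 * Fintype.card V := by omega
    exact_mod_cast this
  refine ⟨288 * (E:ℝ)^7 * 4^(2*E) * ((2 * Fintype.card V : ℕ):ℝ)^(4 * Fintype.card V),
    mul_pos (mul_pos (mul_pos (by norm_num) (pow_pos hERpos 7))
      (pow_pos (by norm_num) _)) (pow_pos h2vpos _), ?_⟩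
  intro n p hp0 hp1 μ hμ X hX
  subst hμ
  subst hX
  have hp0' : (0:ℝ) ≤ p := by linarith
  have hp1' : p ≤ 1 := hp1.le
  have h1p : (0:ℝ) < 1 - p := by linarith
  have hppos : (0:ℝ) < p := by linarith
  set μ := erdosRenyi n (ENNReal.ofReal p) (ENNReal.ofReal_le_one.mpr hp1.le) with hμdef
  by_cases hnv : n < Fintype.card V
  · haveI hempty : IsEmpty (V ↪ Fin n) := by
      constructor
      intro f
      have := Fintype.card_le_of_injective _ f.injective
      rw [Fintype.card_fin] at this
      omega
    simp only [Finset.univ_eq_empty, Finset.sum_empty]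
    have hrhs : (0:ℝ) ≤ 288 * (E:ℝ)^7 * 4^(2*E) *
        ((2 * Fintype.card V : ℕ):ℝ)^(4 * Fintype.card V) * ((n : ℝ) ^ 2)⁻¹ * (1 - p)⁻¹ := by
      apply mul_nonneg (mul_nonneg (by positivity) (by positivity)) (le_of_lt (inv_pos.mpr h1p))
    linarith
  push_neg at hnv
  have hn2 : 2 ≤ n := le_trans hv2 hnv
  have hnRpos : (0:ℝ) < (n:ℝ) := by exact_mod_cast (by omega : 0 < n)
  set D := Fintype.card (V ↪ Fin n) with hDdef
  have hDcast : D = n.descFactorial (Fintype.card V) := by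
    rw [hDdef, Fintype.card_embedding_eq, Fintype.card_fin]
  have hD1 : 1 ≤ D := by
    rw [hDcast]
    have := Nat.descFactorial_eq_zero_iff_lt (n := n) (k := Fintype.card V)
    omega
  have hDRpos : (0:ℝ) < (D:ℝ) := by exact_mod_cast (by omega : 0 < D)
  set Var := variance (subgraphCount G n) μ with hVardef
  -- variance lower bound
  set LB : ℝ := p ^ (2*E-1) * (1-p) * (D:ℝ)^2 / (n:ℝ)^2 with hLBdef
  have hLBpos : 0 < LB := by
    rw [hLBdef]
    exact div_pos (mul_pos (mul_pos (pow_pos hppos _) h1p) (pow_pos hDRpos 2))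
      (pow_pos hnRpos 2)
  have hLBVar : LB ≤ Var := by
    rw [hLBdef, div_le_iff₀ (pow_pos hnRpos 2)]
    have := variance_lower (n := n) G hp0' hp1' (ENNReal.ofReal_le_one.mpr hp1.le) hab
    rw [hVardef, hμdef]
    calc p ^ (2*E-1) * (1-p) * (D:ℝ)^2 ≤ (n:ℝ)^2 * variance (subgraphCount G n)
          (erdosRenyi n (ENNReal.ofReal p) (ENNReal.ofReal_le_one.mpr hp1.le)) := this
      _ = _ := by ring
  have hVarpos : 0 < Var := lt_of_lt_of_le hLBpos hLBVar
  set σ := Real.sqrt Var with hσdef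
  have hσpos : 0 < σ := Real.sqrt_pos.mpr hVarpos
  set B := σ⁻¹ with hBdef
  have hB0 : 0 ≤ B := inv_nonneg.mpr hσpos.le
  have hB2 : B^2 = Var⁻¹ := by
    rw [hBdef, inv_pow, hσdef, Real.sq_sqrt hVarpos.le]
  have hB4 : B^4 = (Var⁻¹)^2 := by
    rw [show (4:ℕ) = 2*2 from rfl, pow_mul, hB2]
  have hB4le : B^4 ≤ (LB⁻¹)^2 := by
    rw [hB4]
    apply pow_le_pow_left₀ (inv_nonneg.mpr hVarpos.le)
    exact inv_anti₀ hLBpos hLBVar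
  -- the X function
  set XF : (V ↪ Fin n) → (Sym2 (Fin n) → Bool) → ℝ :=
    fun f ω => (Real.sqrt Var)⁻¹ * (copyIndicator G f ω - p ^ E) with hXF
  -- basic integral facts
  have hYint : ∀ f : V ↪ Fin n, ∫ ω, copyIndicator G f ω ∂μ = p ^ E := fun f =>
    integral_copyIndicator G hp0' (ENNReal.ofReal_le_one.mpr hp1.le) f
  have hm0 : (0:ℝ) ≤ p ^ E := pow_nonneg hp0' E
  have hm1 : p ^ E ≤ 1 := pow_le_one₀ hp0' hp1'
  have habs1 : ∀ (f : V ↪ Fin n) ω, |copyIndicator G f ω - p ^ E| ≤ 1 := by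
    intro f ω
    have h0 := copyIndicator_nonneg G f ω
    have h1 := copyIndicator_le_one G f ω
    rw [abs_le]
    constructor <;> linarith
  have hcore : ∀ f : V ↪ Fin n,
      ∫ ω, |copyIndicator G f ω - p ^ E| ∂μ ≤ 2*(E:ℝ)*(1-p) := by
    intro f
    have hpt : ∀ ω, |copyIndicator G f ω - p ^ E|
        ≤ (2 - p ^ E) - copyIndicator G f ω := by
      intro ω
      have h0 := copyIndicator_nonneg G f ω
      have h1 := copyIndicator_le_one G f ω
      rw [abs_le]
      constructor <;> linarith
    calc ∫ ω, |copyIndicator G f ω - p ^ E| ∂μ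
        ≤ ∫ ω, ((2 - p ^ E) - copyIndicator G f ω) ∂μ :=
          integral_mono Integrable.of_finite Integrable.of_finite hpt
      _ = (2 - p ^ E) - p ^ E := by
          rw [integral_sub (integrable_const _) Integrable.of_finite, integral_const,
            hYint f]
          simp [measure_univ]
      _ ≤ 2*(E:ℝ)*(1-p) := by
          have := one_sub_pow_le' hp0' hp1' E
          linarith
  have hXabs : ∀ (f : V ↪ Fin n) ω, |XF f ω| = B * |copyIndicator G f ω - p ^ E| := by
    intro f ω
    rw [hXF]
    simp only
    rw [abs_mul, abs_inv, abs_of_nonneg (Real.sqrt_nonneg _)]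
  have hXle : ∀ (f : V ↪ Fin n) ω, |XF f ω| ≤ B := by
    intro f ω
    rw [hXabs]
    calc B * |copyIndicator G f ω - p ^ E| ≤ B * 1 :=
          mul_le_mul_of_nonneg_left (habs1 f ω) hB0
      _ = B := mul_one B
  set T : ℝ := B^4 * (2*(E:ℝ)*(1-p)) with hTdef
  have hA0 : (0:ℝ) ≤ 2*(E:ℝ)*(1-p) :=
    mul_nonneg (mul_nonneg (by norm_num) hERpos.le) h1p.le
  have hT0 : 0 ≤ T := by
    rw [hTdef]
    exact mul_nonneg (pow_nonneg hB0 4) hA0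
  -- per-term integral bounds
  have hI4 : ∀ i j k l : V ↪ Fin n,
      ∫ ω, |XF i ω * XF j ω * XF k ω * XF l ω| ∂μ ≤ T := by
    intro i j k l
    have hpt : ∀ ω, |XF i ω * XF j ω * XF k ω * XF l ω|
        ≤ (B*B*B*B) * |copyIndicator G i ω - p ^ E| := by
      intro ω
      rw [abs_mul, abs_mul, abs_mul]
      have e1 := hXabs i ω
      have e2 := hXle j ω
      have e3 := hXle k ω
      have e4 := hXle l ω
      have n2 := abs_nonneg (XF j ω)
      have n3 := abs_nonneg (XF k ω)
      have n4 := abs_nonneg (XF l ω)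
      have n5 := abs_nonneg (copyIndicator G i ω - p ^ E)
      have m1 : 0 ≤ B * |copyIndicator G i ω - p ^ E| := mul_nonneg hB0 n5
      have m2 : 0 ≤ B * |copyIndicator G i ω - p ^ E| * B := mul_nonneg m1 hB0
      have m3 : 0 ≤ B * |copyIndicator G i ω - p ^ E| * B * B := mul_nonneg m2 hB0
      calc |XF i ω| * |XF j ω| * |XF k ω| * |XF l ω|
          ≤ B * |copyIndicator G i ω - p ^ E| * B * B * B :=
            mul_le_mul (mul_le_mul (mul_le_mul (le_of_eq e1) e2 n2 m1) e3 n3 m2) e4 n4 m3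
        _ = (B*B*B*B) * |copyIndicator G i ω - p ^ E| := by ring
    calc ∫ ω, |XF i ω * XF j ω * XF k ω * XF l ω| ∂μ
        ≤ ∫ ω, (B*B*B*B) * |copyIndicator G i ω - p ^ E| ∂μ :=
          integral_mono Integrable.of_finite Integrable.of_finite hpt
      _ = (B*B*B*B) * ∫ ω, |copyIndicator G i ω - p ^ E| ∂μ := integral_const_mul _ _
      _ ≤ (B*B*B*B) * (2*(E:ℝ)*(1-p)) := by
          apply mul_le_mul_of_nonneg_left (hcore i)
          exact mul_nonneg (mul_nonneg (mul_nonneg hB0 hB0) hB0) hB0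
      _ = T := by rw [hTdef]; ring
  have hI2a : ∀ i j : V ↪ Fin n,
      ∫ ω, |XF i ω * XF j ω| ∂μ ≤ B^2 * (2*(E:ℝ)*(1-p)) := by
    intro i j
    have hpt : ∀ ω, |XF i ω * XF j ω| ≤ (B*B) * |copyIndicator G i ω - p ^ E| := by
      intro ω
      rw [abs_mul]
      have e1 := hXabs i ω
      have e2 := hXle j ω
      have n2 := abs_nonneg (XF j ω)
      have n5 := abs_nonneg (copyIndicator G i ω - p ^ E)
      have m1 : 0 ≤ B * |copyIndicator G i ω - p ^ E| := mul_nonneg hB0 n5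
      calc |XF i ω| * |XF j ω| ≤ B * |copyIndicator G i ω - p ^ E| * B :=
            mul_le_mul (le_of_eq e1) e2 n2 m1
        _ = (B*B) * |copyIndicator G i ω - p ^ E| := by ring
    calc ∫ ω, |XF i ω * XF j ω| ∂μ
        ≤ ∫ ω, (B*B) * |copyIndicator G i ω - p ^ E| ∂μ :=
          integral_mono Integrable.of_finite Integrable.of_finite hpt
      _ = (B*B) * ∫ ω, |copyIndicator G i ω - p ^ E| ∂μ := integral_const_mul _ _
      _ ≤ (B*B) * (2*(E:ℝ)*(1-p)) := by
          apply mul_le_mul_of_nonneg_left (hcore i)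
          exact mul_nonneg hB0 hB0
      _ = B^2 * (2*(E:ℝ)*(1-p)) := by ring
  have hI2b : ∀ k l : V ↪ Fin n, ∫ ω, |XF k ω * XF l ω| ∂μ ≤ B^2 := by
    intro k l
    have hpt : ∀ ω, |XF k ω * XF l ω| ≤ B * B := by
      intro ω
      rw [abs_mul]
      exact mul_le_mul (hXle k ω) (hXle l ω) (abs_nonneg _) hB0
    calc ∫ ω, |XF k ω * XF l ω| ∂μ ≤ ∫ ω, (B * B : ℝ) ∂μ :=
          integral_mono Integrable.of_finite (integrable_const _) hpt
      _ = B * B := by simp [measure_univ]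
      _ = B^2 := by ring
  have hI3a : ∀ i j k : V ↪ Fin n,
      ∫ ω, |XF i ω * XF j ω * XF k ω| ∂μ ≤ B^3 * (2*(E:ℝ)*(1-p)) := by
    intro i j k
    have hpt : ∀ ω, |XF i ω * XF j ω * XF k ω| ≤ (B*B*B) * |copyIndicator G i ω - p ^ E| := by
      intro ω
      rw [abs_mul, abs_mul]
      have e1 := hXabs i ω
      have e2 := hXle j ω
      have e3 := hXle k ω
      have n2 := abs_nonneg (XF j ω)
      have n3 := abs_nonneg (XF k ω)
      have n5 := abs_nonneg (copyIndicator G i ω - p ^ E)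
      have m1 : 0 ≤ B * |copyIndicator G i ω - p ^ E| := mul_nonneg hB0 n5
      have m2 : 0 ≤ B * |copyIndicator G i ω - p ^ E| * B := mul_nonneg m1 hB0
      calc |XF i ω| * |XF j ω| * |XF k ω|
          ≤ B * |copyIndicator G i ω - p ^ E| * B * B :=
            mul_le_mul (mul_le_mul (le_of_eq e1) e2 n2 m1) e3 n3 m2
        _ = (B*B*B) * |copyIndicator G i ω - p ^ E| := by ring
    calc ∫ ω, |XF i ω * XF j ω * XF k ω| ∂μ
        ≤ ∫ ω, (B*B*B) * |copyIndicator G i ω - p ^ E| ∂μ :=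
          integral_mono Integrable.of_finite Integrable.of_finite hpt
      _ = (B*B*B) * ∫ ω, |copyIndicator G i ω - p ^ E| ∂μ := integral_const_mul _ _
      _ ≤ (B*B*B) * (2*(E:ℝ)*(1-p)) := by
          apply mul_le_mul_of_nonneg_left (hcore i)
          exact mul_nonneg (mul_nonneg hB0 hB0) hB0
      _ = B^3 * (2*(E:ℝ)*(1-p)) := by ring
  have hI1b : ∀ l : V ↪ Fin n, ∫ ω, |XF l ω| ∂μ ≤ B := by
    intro l
    calc ∫ ω, |XF l ω| ∂μ ≤ ∫ ω, (B : ℝ) ∂μ :=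
          integral_mono Integrable.of_finite (integrable_const _) (fun ω => hXle l ω)
      _ = B := by simp [measure_univ]
  -- term bounds for the three gamma sums
  have ht2 : ∀ i j k l : V ↪ Fin n,
      (∫ ω, |XF i ω * XF j ω| ∂μ) * ∫ ω, |XF k ω * XF l ω| ∂μ ≤ T := by
    intro i j k l
    have e1 := hI2a i j
    have e2 := hI2b k l
    have n2 : 0 ≤ ∫ ω, |XF k ω * XF l ω| ∂μ := integral_nonneg fun ω => abs_nonneg _
    calc (∫ ω, |XF i ω * XF j ω| ∂μ) * ∫ ω, |XF k ω * XF l ω| ∂μ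
        ≤ (B^2 * (2*(E:ℝ)*(1-p))) * B^2 := by
          apply mul_le_mul e1 e2 n2
          exact mul_nonneg (pow_nonneg hB0 2) hA0
      _ = T := by rw [hTdef]; ring
  have ht3 : ∀ i j k l : V ↪ Fin n,
      (∫ ω, |XF i ω * XF j ω * XF k ω| ∂μ) * ∫ ω, |XF l ω| ∂μ ≤ T := by
    intro i j k l
    have e1 := hI3a i j k
    have e2 := hI1b l
    have n2 : 0 ≤ ∫ ω, |XF l ω| ∂μ := integral_nonneg fun ω => abs_nonneg _
    calc (∫ ω, |XF i ω * XF j ω * XF k ω| ∂μ) * ∫ ω, |XF l ω| ∂μ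
        ≤ (B^3 * (2*(E:ℝ)*(1-p))) * B := by
          apply mul_le_mul e1 e2 n2
          exact mul_nonneg (pow_nonneg hB0 3) hA0
      _ = T := by rw [hTdef]; ring
  -- nested sum machinery
  set M : ℕ := 2 * E^2 * n^(Fintype.card V - 2) with hMdef
  have hstep : ∀ (s : Finset (V ↪ Fin n)) (k : ℕ), s.card ≤ k →
      ∀ (t : (V ↪ Fin n) → ℝ) (c : ℝ), 0 ≤ c → (∀ x, t x ≤ c) →
      ∑ x ∈ nbhd G s, t x ≤ ((k * M : ℕ) : ℝ) * c := by
    intro s k hk t c hc ht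
    calc ∑ x ∈ nbhd G s, t x ≤ (nbhd G s).card • c :=
          Finset.sum_le_card_nsmul _ _ _ (fun x _ => ht x)
      _ = ((nbhd G s).card : ℝ) * c := nsmul_eq_mul _ _
      _ ≤ ((k * M : ℕ) : ℝ) * c := by
          apply mul_le_mul_of_nonneg_right _ hc
          have h1 := card_nbhd_le G s
          have h2 : s.card * (2 * G.edgeFinset.card ^ 2 * n ^ (Fintype.card V - 2))
              ≤ k * M := by
            rw [hMdef, hEdef]
            exact Nat.mul_le_mul_right _ hk
          exact_mod_cast le_trans h1 h2
  have htop : ∀ (t : (V ↪ Fin n) → ℝ) (c : ℝ), 0 ≤ c → (∀ x, t x ≤ c) →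
      ∑ x : V ↪ Fin n, t x ≤ (D : ℝ) * c := by
    intro t c hc ht
    calc ∑ x : V ↪ Fin n, t x ≤ (Finset.univ.card) • c :=
          Finset.sum_le_card_nsmul _ _ _ (fun x _ => ht x)
      _ = ((Finset.univ.card : ℕ) : ℝ) * c := nsmul_eq_mul _ _
      _ = (D : ℝ) * c := by rw [Finset.card_univ, hDdef]
  have hc3 : 0 ≤ ((3 * M : ℕ) : ℝ) * T := mul_nonneg (Nat.cast_nonneg _) hT0
  have hc2 : 0 ≤ ((2 * M : ℕ) : ℝ) * (((3 * M : ℕ) : ℝ) * T) :=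
    mul_nonneg (Nat.cast_nonneg _) hc3
  have hc1 : 0 ≤ ((1 * M : ℕ) : ℝ) * (((2 * M : ℕ) : ℝ) * (((3 * M : ℕ) : ℝ) * T)) :=
    mul_nonneg (Nat.cast_nonneg _) hc2
  have hnest : ∀ F : (V ↪ Fin n) → (V ↪ Fin n) → (V ↪ Fin n) → (V ↪ Fin n) → ℝ,
      (∀ i j k l, F i j k l ≤ T) →
      (∑ i : V ↪ Fin n, ∑ j ∈ nbhd G {i}, ∑ k ∈ nbhd G {i, j}, ∑ l ∈ nbhd G {i, j, k},
        F i j k l)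
        ≤ (D : ℝ) * (((1 * M : ℕ) : ℝ) * (((2 * M : ℕ) : ℝ) * (((3 * M : ℕ) : ℝ) * T))) := by
    intro F hF
    apply htop _ _ hc1
    intro i
    apply hstep _ _ (by simp) _ _ hc2
    intro j
    apply hstep _ _ (by
      apply le_trans (Finset.card_insert_le _ _)
      simp) _ _ hc3
    intro k
    apply hstep _ _ (by
      apply le_trans (Finset.card_insert_le _ _)
      have := Finset.card_insert_le j ({k} : Finset (V ↪ Fin n))
      simp only [Finset.card_singleton] at this ⊢
      omega) _ _ hT0
    intro l
    exact hF i j k l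
  have hS1 := hnest _ hI4
  have hS2 := hnest _ ht2
  have hS3 := hnest _ ht3
  -- final numeric assembly
  set R : ℝ := (D : ℝ) * (((1 * M : ℕ) : ℝ) * (((2 * M : ℕ) : ℝ) * (((3 * M : ℕ) : ℝ) * T)))
    with hRdef
  have hsum3 : (∑ i : V ↪ Fin n, ∑ j ∈ nbhd G {i}, ∑ k ∈ nbhd G {i, j},
        ∑ l ∈ nbhd G {i, j, k}, ∫ ω, |XF i ω * XF j ω * XF k ω * XF l ω| ∂μ) +
      (∑ i : V ↪ Fin n, ∑ j ∈ nbhd G {i}, ∑ k ∈ nbhd G {i, j}, ∑ l ∈ nbhd G {i, j, k},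
        (∫ ω, |XF i ω * XF j ω| ∂μ) * ∫ ω, |XF k ω * XF l ω| ∂μ) +
      (∑ i : V ↪ Fin n, ∑ j ∈ nbhd G {i}, ∑ k ∈ nbhd G {i, j}, ∑ l ∈ nbhd G {i, j, k},
        (∫ ω, |XF i ω * XF j ω * XF k ω| ∂μ) * ∫ ω, |XF l ω| ∂μ) ≤ 3 * R := by
    linarith
  refine le_trans hsum3 ?_
  -- it remains: 3 * R ≤ C * (n²)⁻¹ * (1-p)⁻¹
  set P : ℝ := (n:ℝ)^(Fintype.card V - 2) with hPdef
  set W : ℝ := (n:ℝ)^(Fintype.card V) with hWdef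
  have hP0 : 0 ≤ P := pow_nonneg hnRpos.le _
  have hW0 : 0 ≤ W := pow_nonneg hnRpos.le _
  have hN2ne : ((n:ℝ)^2) ≠ 0 := ne_of_gt (pow_pos hnRpos 2)
  have hDne : ((D:ℝ)) ≠ 0 := ne_of_gt hDRpos
  have hMR : ((M:ℕ):ℝ) = 2*(E:ℝ)^2*P := by
    rw [hMdef, hPdef]
    push_cast
    ring
  have hDn : (D:ℝ) ≤ W := by
    have h1 : D ≤ n ^ (Fintype.card V) := by
      rw [hDdef]
      calc Fintype.card (V ↪ Fin n) ≤ Fintype.card (V → Fin n) :=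
            Fintype.card_le_of_injective _ (DFunLike.coe_injective)
        _ = n ^ (Fintype.card V) := by rw [Fintype.card_fun, Fintype.card_fin]
    rw [hWdef]
    exact_mod_cast h1
  -- bound on T
  have hqinv : (p^(2*E-1))⁻¹ ≤ (4:ℝ)^E := by
    have hq1 : ((4:ℝ)^E)⁻¹ ≤ p^(2*E-1) := by
      have ha : ((4:ℝ)^E)⁻¹ = (2⁻¹:ℝ)^(2*E) := by
        rw [inv_pow]
        norm_num [pow_mul]
      have hb : (2⁻¹:ℝ)^(2*E) ≤ (2⁻¹:ℝ)^(2*E-1) :=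
        pow_le_pow_of_le_one (by norm_num) (by norm_num) (by omega)
      have hc : (2⁻¹:ℝ)^(2*E-1) ≤ p^(2*E-1) :=
        pow_le_pow_left₀ (by norm_num) (by rw [inv_eq_one_div]; linarith) _
      rw [ha]
      exact le_trans hb hc
    have h4pos : (0:ℝ) < ((4:ℝ)^E)⁻¹ := inv_pos.mpr (pow_pos (by norm_num) E)
    have := inv_anti₀ h4pos hq1
    rwa [inv_inv] at this
  have hLBinv : LB⁻¹ = (n:ℝ)^2 * ((p^(2*E-1))⁻¹ * ((1-p)⁻¹ * (((D:ℝ)^2)⁻¹))) := by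
    rw [hLBdef]
    field_simp
  have hB4le' : B^4 ≤ ((n:ℝ)^2 * ((4:ℝ)^E * ((1-p)⁻¹ * (((D:ℝ)^2)⁻¹))))^2 := by
    refine le_trans hB4le ?_
    apply pow_le_pow_left₀ (inv_nonneg.mpr hLBpos.le)
    rw [hLBinv]
    have hrest : (0:ℝ) ≤ (1-p)⁻¹ * (((D:ℝ)^2)⁻¹) :=
      mul_nonneg (inv_nonneg.mpr h1p.le) (inv_nonneg.mpr (pow_nonneg hDRpos.le 2))
    exact mul_le_mul_of_nonneg_left (mul_le_mul_of_nonneg_right hqinv hrest)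
      (pow_nonneg hnRpos.le 2)
  set T' : ℝ := ((n:ℝ)^2 * ((4:ℝ)^E * ((1-p)⁻¹ * (((D:ℝ)^2)⁻¹))))^2 * (2*(E:ℝ)*(1-p))
    with hT'def
  have hTle : T ≤ T' := by
    rw [hTdef, hT'def]
    exact mul_le_mul_of_nonneg_right hB4le' hA0
  have hT'0 : 0 ≤ T' := by
    rw [hT'def]
    exact mul_nonneg (pow_nonneg (mul_nonneg (pow_nonneg hnRpos.le 2)
      (mul_nonneg (pow_nonneg (by norm_num) E)
        (mul_nonneg (inv_nonneg.mpr h1p.le) (inv_nonneg.mpr (pow_nonneg hDRpos.le 2))))) 2) hA0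
  -- bound R
  have hMnn : (0:ℝ) ≤ ((M:ℕ):ℝ) := Nat.cast_nonneg M
  have hR' : R = (D:ℝ) * (((M:ℕ):ℝ) * ((2*((M:ℕ):ℝ)) * ((3*((M:ℕ):ℝ)) * T))) := by
    rw [hRdef]
    push_cast
    ring
  have hRle : R ≤ W * (((M:ℕ):ℝ) * ((2*((M:ℕ):ℝ)) * ((3*((M:ℕ):ℝ)) * T'))) := by
    rw [hR']
    have s3 : (3*((M:ℕ):ℝ)) * T ≤ (3*((M:ℕ):ℝ)) * T' :=
      mul_le_mul_of_nonneg_left hTle (by linarith)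
    have s2 : (2*((M:ℕ):ℝ)) * ((3*((M:ℕ):ℝ)) * T)
        ≤ (2*((M:ℕ):ℝ)) * ((3*((M:ℕ):ℝ)) * T') :=
      mul_le_mul_of_nonneg_left s3 (by linarith)
    have s1 : ((M:ℕ):ℝ) * ((2*((M:ℕ):ℝ)) * ((3*((M:ℕ):ℝ)) * T))
        ≤ ((M:ℕ):ℝ) * ((2*((M:ℕ):ℝ)) * ((3*((M:ℕ):ℝ)) * T')) :=
      mul_le_mul_of_nonneg_left s2 hMnn
    have hinner0 : 0 ≤ ((M:ℕ):ℝ) * ((2*((M:ℕ):ℝ)) * ((3*((M:ℕ):ℝ)) * T)) :=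
      mul_nonneg hMnn (mul_nonneg (by linarith) (mul_nonneg (by linarith) hT0))
    calc (D:ℝ) * (((M:ℕ):ℝ) * ((2*((M:ℕ):ℝ)) * ((3*((M:ℕ):ℝ)) * T)))
        ≤ W * (((M:ℕ):ℝ) * ((2*((M:ℕ):ℝ)) * ((3*((M:ℕ):ℝ)) * T))) :=
          mul_le_mul_of_nonneg_right hDn hinner0
      _ ≤ W * (((M:ℕ):ℝ) * ((2*((M:ℕ):ℝ)) * ((3*((M:ℕ):ℝ)) * T'))) :=
          mul_le_mul_of_nonneg_left s1 hW0
  -- the power-counting inequality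
  have hP2 : P * (n:ℝ)^2 = W := by
    rw [hPdef, hWdef, ← pow_add]
    congr 1
    omega
  have hPW : P = W / (n:ℝ)^2 := by
    rw [← hP2]
    field_simp
  have hW4 : W^4 ≤ (((2*Fintype.card V:ℕ):ℝ))^(4*Fintype.card V) * (D:ℝ)^4 := by
    have h := descFactorial_bound (v := Fintype.card V) (n := n) (by omega) hnv
    have hDr : ((n.descFactorial (Fintype.card V) : ℕ) : ℝ) = (D:ℝ) := by
      exact_mod_cast congrArg (fun x : ℕ => (x:ℝ)) hDcast.symm
    rw [hDr] at h
    calc W^4 = ((n:ℝ)^(Fintype.card V))^4 := by rw [hWdef]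
      _ ≤ ((((2*Fintype.card V:ℕ):ℝ))^(Fintype.card V) * (D:ℝ))^4 :=
          pow_le_pow_left₀ (pow_nonneg hnRpos.le _) h 4
      _ = ((((2*Fintype.card V:ℕ):ℝ))^(Fintype.card V))^4 * (D:ℝ)^4 := mul_pow _ _ 4
      _ = (((2*Fintype.card V:ℕ):ℝ))^(4*Fintype.card V) * (D:ℝ)^4 := by
          rw [← pow_mul, Nat.mul_comm (Fintype.card V) 4]
  have hkey : W * P^3 * (((n:ℝ)^2)^2 * ((((D:ℝ)^2)⁻¹))^2)
      ≤ (((2*Fintype.card V:ℕ):ℝ))^(4*Fintype.card V) * (((n:ℝ)^2)⁻¹) := by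
    have heq : W * P^3 * (((n:ℝ)^2)^2 * ((((D:ℝ)^2)⁻¹))^2)
        = W^4 * (((n:ℝ)^2)⁻¹) * (((D:ℝ)^4)⁻¹) := by
      rw [hPW]
      field_simp
    rw [heq]
    calc W^4 * (((n:ℝ)^2)⁻¹) * (((D:ℝ)^4)⁻¹)
        ≤ ((((2*Fintype.card V:ℕ):ℝ))^(4*Fintype.card V) * (D:ℝ)^4)
            * (((n:ℝ)^2)⁻¹) * (((D:ℝ)^4)⁻¹) := by
          apply mul_le_mul_of_nonneg_right (mul_le_mul_of_nonneg_right hW4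
            (inv_nonneg.mpr (pow_nonneg hnRpos.le 2)))
            (inv_nonneg.mpr (pow_nonneg hDRpos.le 4))
      _ = (((2*Fintype.card V:ℕ):ℝ))^(4*Fintype.card V) * (((n:ℝ)^2)⁻¹) := by
          field_simp
  -- final computation
  have hFinv : ((1-p)⁻¹)^2 * (1-p) = (1-p)⁻¹ := by
    rw [sq]
    field_simp
  have h4sq : ((4:ℝ)^E)^2 = (4:ℝ)^(2*E) := by
    rw [← pow_mul, Nat.mul_comm E 2]
  have hexpand : 3 * (W * (((M:ℕ):ℝ) * ((2*((M:ℕ):ℝ)) * ((3*((M:ℕ):ℝ)) * T'))))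
      = (288 * (E:ℝ)^7 * ((4:ℝ)^E)^2)
        * (W * P^3 * (((n:ℝ)^2)^2 * ((((D:ℝ)^2)⁻¹))^2))
        * (((1-p)⁻¹)^2 * (1-p)) := by
    rw [hMR, hT'def]
    ring
  calc 3 * R ≤ 3 * (W * (((M:ℕ):ℝ) * ((2*((M:ℕ):ℝ)) * ((3*((M:ℕ):ℝ)) * T')))) := by
        linarith
    _ = (288 * (E:ℝ)^7 * ((4:ℝ)^E)^2)
        * (W * P^3 * (((n:ℝ)^2)^2 * ((((D:ℝ)^2)⁻¹))^2))
        * (((1-p)⁻¹)^2 * (1-p)) := hexpand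
    _ ≤ (288 * (E:ℝ)^7 * ((4:ℝ)^E)^2)
        * ((((2*Fintype.card V:ℕ):ℝ))^(4*Fintype.card V) * (((n:ℝ)^2)⁻¹))
        * (((1-p)⁻¹)^2 * (1-p)) := by
        apply mul_le_mul_of_nonneg_right (mul_le_mul_of_nonneg_left hkey ?_) ?_
        · apply mul_nonneg (mul_nonneg (by norm_num) (pow_nonneg hERpos.le 7))
            (pow_nonneg (pow_nonneg (by norm_num) E) 2)
        · rw [hFinv]
          exact inv_nonneg.mpr h1p.le
    _ = 288 * (E:ℝ)^7 * 4^(2*E) * ((2 * Fintype.card V : ℕ):ℝ)^(4 * Fintype.card V)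
        * ((n : ℝ) ^ 2)⁻¹ * (1 - p)⁻¹ := by
        rw [hFinv, ← h4sq]
        ring
end

section
/- There exist constants c₁, c₂, C > 0 such that for all reals κ₃, κ₄ with 0 < max(|κ₃|, |κ₄|) and |κ₃| ≤ c₁, |κ₄| ≤ c₁, setting n = ⌊c₂ κ₃^{−2}⌋ ∧ ⌊c₂ |κ₄|^{−1}⌋ ≥ 1, the assignment P(ξ = −2) = 1/12 + (−2√n κ₃ + n κ₄)/24, P(ξ = −1) = 1/6 + (√n κ₃ − n κ₄)/6, P(ξ = 0) = 1/2 + n κ₄/4, P(ξ = 1) = 1/6 − (√n κ₃ + n κ₄)/6, P(ξ = 2) = 1/12 + (2√n κ₃ + n κ₄)/24 defines a probability distribution on {−2, −1, 0, 1, 2}, and a random variable ξ with this distribution satisfies E[ξ] = 0, E[ξ²] = 1, the third cumulant κ₃(ξ) = √n κ₃, the fourth cumulant κ₄(ξ) = n κ₄, and E|ξ|⁵ ≤ C. -/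
open MeasureTheory ProbabilityTheory

lemma integral_comp_of_five {Ω : Type} [MeasurableSpace Ω] (P : Measure Ω)
    [IsProbabilityMeasure P] (ξ : Ω → ℝ) (hξ : Measurable ξ)
    (v : Fin 5 → ℝ) (hv : Function.Injective v) (p : Fin 5 → ℝ)
    (hp0 : ∀ i, 0 ≤ p i) (hP : ∀ i, P {ω | ξ ω = v i} = ENNReal.ofReal (p i))
    (hsum : ∑ i, p i = 1) (g : ℝ → ℝ) :
    ∫ ω, g (ξ ω) ∂P = ∑ i, g (v i) * p i := by
  set s : Fin 5 → Set Ω := fun i => ξ ⁻¹' {v i} with hs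
  have hmeas : ∀ i, MeasurableSet (s i) := fun i => hξ (measurableSet_singleton _)
  have hdisj : Pairwise (Function.onFun Disjoint s) := by
    intro i j hij
    refine Set.disjoint_left.mpr fun ω hi hj => hij (hv ?_)
    simp only [hs, Set.mem_preimage, Set.mem_singleton_iff] at hi hj
    rw [← hi, ← hj]
  have hsi : ∀ i, P (s i) = ENNReal.ofReal (p i) := fun i => hP i
  have hU : P (⋃ i, s i) = 1 := by
    rw [measure_iUnion hdisj hmeas, tsum_fintype]
    simp only [hsi]
    rw [← ENNReal.ofReal_sum_of_nonneg (fun i _ => hp0 i), hsum, ENNReal.ofReal_one]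
  have hcompl : P (⋃ i, s i)ᶜ = 0 := by
    rw [measure_compl (MeasurableSet.iUnion hmeas) (measure_ne_top P _), measure_univ, hU,
      tsub_self]
  have hae : (fun ω => g (ξ ω)) =ᵐ[P]
      fun ω => ∑ i, Set.indicator (s i) (fun _ => g (v i)) ω := by
    have hmem : ∀ᵐ ω ∂P, ω ∈ ⋃ i, s i := by
      rw [ae_iff]
      convert hcompl using 2
      exact rfl
    filter_upwards [hmem] with ω hω
    obtain ⟨t, ⟨i, rfl⟩, hi⟩ := hω
    rw [Finset.sum_eq_single i]
    · simp only [hs, Set.mem_preimage, Set.mem_singleton_iff] at hi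
      rw [Set.indicator_of_mem (by simp [hs, hi]) _, hi]
    · intro j _ hj
      apply Set.indicator_of_notMem
      simp only [hs, Set.mem_preimage, Set.mem_singleton_iff] at hi ⊢
      intro h
      exact hj (hv (h.symm.trans hi).symm ▸ rfl)
    · simp
  rw [integral_congr_ae hae, integral_finset_sum _
      (fun i _ => (integrable_const (g (v i))).indicator (hmeas i))]
  refine Finset.sum_congr rfl fun i _ => ?_
  rw [integral_indicator_const _ (hmeas i), measureReal_def, hsi i, ENNReal.toReal_ofReal (hp0 i),
    smul_eq_mul, mul_comm]

set_option maxHeartbeats 1000000 in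
/-- Construction of the auxiliary five-point distribution: there are constants
`c₁, c₂, C > 0` such that for all reals `κ₃, κ₄`, not both zero, with `|κ₃| ≤ c₁` and
`|κ₄| ≤ c₁`, putting `n = ⌊c₂ κ₃⁻²⌋ ∧ ⌊c₂ |κ₄|⁻¹⌋ ≥ 1` (with the convention `1/0 = ∞`,
realized below by computing the minimum in `ℝ≥0∞`), the displayed assignment of masses to
`{-2, -1, 0, 1, 2}` is a probability distribution, and any random variable `ξ` with this
distribution satisfies `E ξ = 0`, `E ξ² = 1`, `κ₃(ξ) = E ξ³ = √n κ₃`,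
`κ₄(ξ) = E ξ⁴ - 3 = n κ₄`, and `E |ξ|⁵ ≤ C`. -/
theorem five_point_distribution :
    ∃ c₁ c₂ C : ℝ, 0 < c₁ ∧ 0 < c₂ ∧ 0 < C ∧
      ∀ κ₃ κ₄ : ℝ, 0 < max |κ₃| |κ₄| → |κ₃| ≤ c₁ → |κ₄| ≤ c₁ →
      ∀ n : ℕ, n = ⌊((ENNReal.ofReal c₂ / ENNReal.ofReal (κ₃ ^ 2)) ⊓
          (ENNReal.ofReal c₂ / ENNReal.ofReal |κ₄|)).toReal⌋₊ →
        1 ≤ n ∧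
        (0 ≤ 1 / 12 + (-2 * Real.sqrt n * κ₃ + n * κ₄) / 24 ∧
         0 ≤ 1 / 6 + (Real.sqrt n * κ₃ - n * κ₄) / 6 ∧
         0 ≤ 1 / 2 + n * κ₄ / 4 ∧
         0 ≤ 1 / 6 - (Real.sqrt n * κ₃ + n * κ₄) / 6 ∧
         0 ≤ 1 / 12 + (2 * Real.sqrt n * κ₃ + n * κ₄) / 24) ∧
        (1 / 12 + (-2 * Real.sqrt n * κ₃ + n * κ₄) / 24) +
          (1 / 6 + (Real.sqrt n * κ₃ - n * κ₄) / 6) +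
          (1 / 2 + n * κ₄ / 4) +
          (1 / 6 - (Real.sqrt n * κ₃ + n * κ₄) / 6) +
          (1 / 12 + (2 * Real.sqrt n * κ₃ + n * κ₄) / 24) = 1 ∧
        ∀ (Ω : Type) (_ : MeasurableSpace Ω) (P : Measure Ω)
          (_ : IsProbabilityMeasure P) (ξ : Ω → ℝ),
          Measurable ξ →
          P {ω | ξ ω = -2} =
            ENNReal.ofReal (1 / 12 + (-2 * Real.sqrt n * κ₃ + n * κ₄) / 24) →
          P {ω | ξ ω = -1} =
            ENNReal.ofReal (1 / 6 + (Real.sqrt n * κ₃ - n * κ₄) / 6) →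
          P {ω | ξ ω = 0} = ENNReal.ofReal (1 / 2 + n * κ₄ / 4) →
          P {ω | ξ ω = 1} =
            ENNReal.ofReal (1 / 6 - (Real.sqrt n * κ₃ + n * κ₄) / 6) →
          P {ω | ξ ω = 2} =
            ENNReal.ofReal (1 / 12 + (2 * Real.sqrt n * κ₃ + n * κ₄) / 24) →
          (∫ ω, ξ ω ∂P = 0 ∧ ∫ ω, ξ ω ^ 2 ∂P = 1 ∧
            ∫ ω, ξ ω ^ 3 ∂P = Real.sqrt n * κ₃ ∧
            (∫ ω, ξ ω ^ 4 ∂P) - 3 = n * κ₄ ∧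
            ∫ ω, |ξ ω| ^ 5 ∂P ≤ C) := by
  refine ⟨1/100, 1/100, 100, by norm_num, by norm_num, by norm_num, ?_⟩
  intro κ₃ κ₄ hmax h1 h2 n hn
  set m := ((ENNReal.ofReal (1/100:ℝ) / ENNReal.ofReal (κ₃ ^ 2)) ⊓
      (ENNReal.ofReal (1/100:ℝ) / ENNReal.ofReal |κ₄|)) with hm
  have hc2t : (ENNReal.ofReal (1/100:ℝ)) ≠ ⊤ := ENNReal.ofReal_ne_top
  have hne : κ₃ ≠ 0 ∨ κ₄ ≠ 0 := by
    rcases lt_max_iff.mp hmax with h | h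
    · exact Or.inl (abs_pos.mp h)
    · exact Or.inr (abs_pos.mp h)
  have hm_lt : m < ⊤ := by
    rcases hne with h | h
    · refine lt_of_le_of_lt (min_le_left _ _) (ENNReal.div_lt_top hc2t ?_)
      simp only [ne_eq, ENNReal.ofReal_eq_zero, not_le]
      positivity
    · refine lt_of_le_of_lt (min_le_right _ _) (ENNReal.div_lt_top hc2t ?_)
      simp only [ne_eq, ENNReal.ofReal_eq_zero, not_le]
      positivity
  have hm_ne : m ≠ ⊤ := hm_lt.ne
  -- 1 ≤ n
  have h1m : (1:ENNReal) ≤ m := by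
    refine le_min ?_ ?_
    · rw [ENNReal.le_div_iff_mul_le (Or.inr (by simp)) (Or.inl (ENNReal.ofReal_ne_top)), one_mul]
      refine ENNReal.ofReal_le_ofReal ?_
      calc κ₃ ^ 2 = |κ₃| ^ 2 := (sq_abs κ₃).symm
        _ ≤ (1/100) ^ 2 := by nlinarith [abs_nonneg κ₃]
        _ ≤ 1/100 := by norm_num
    · rw [ENNReal.le_div_iff_mul_le (Or.inr (by simp)) (Or.inl (ENNReal.ofReal_ne_top)), one_mul]
      exact ENNReal.ofReal_le_ofReal h2
  have h1n : 1 ≤ n := by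
    rw [hn]
    exact Nat.le_floor (by simpa using ENNReal.toReal_mono hm_ne h1m)
  have hnr : (n:ℝ) ≤ m.toReal := hn ▸ Nat.floor_le ENNReal.toReal_nonneg
  -- key bounds
  have hκ3 : (n:ℝ) * κ₃ ^ 2 ≤ 1/100 := by
    rcases eq_or_ne κ₃ 0 with h | h
    · simp [h]
    · have hpos : (0:ℝ) < κ₃ ^ 2 := by positivity
      have hlt : (ENNReal.ofReal (1/100:ℝ) / ENNReal.ofReal (κ₃ ^ 2)) ≠ ⊤ :=
        (ENNReal.div_lt_top hc2t (by simp [ENNReal.ofReal_eq_zero, not_le, hpos, h])).ne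
      have : m.toReal ≤ (1/100) / κ₃ ^ 2 := by
        have := ENNReal.toReal_mono hlt (min_le_left (ENNReal.ofReal (1/100:ℝ) / ENNReal.ofReal (κ₃ ^ 2)) (ENNReal.ofReal (1/100:ℝ) / ENNReal.ofReal |κ₄|))
        rwa [ENNReal.toReal_div, ENNReal.toReal_ofReal (by norm_num),
          ENNReal.toReal_ofReal hpos.le] at this
      have := hnr.trans this
      rw [le_div_iff₀ hpos] at this
      linarith
  have hκ4 : (n:ℝ) * |κ₄| ≤ 1/100 := by
    rcases eq_or_ne κ₄ 0 with h | h
    · simp [h]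
    · have hpos : (0:ℝ) < |κ₄| := abs_pos.mpr h
      have hlt : (ENNReal.ofReal (1/100:ℝ) / ENNReal.ofReal |κ₄|) ≠ ⊤ :=
        (ENNReal.div_lt_top hc2t (by simpa [ENNReal.ofReal_eq_zero, not_le] using hpos)).ne
      have : m.toReal ≤ (1/100) / |κ₄| := by
        have := ENNReal.toReal_mono hlt (min_le_right (ENNReal.ofReal (1/100:ℝ) / ENNReal.ofReal (κ₃ ^ 2)) (ENNReal.ofReal (1/100:ℝ) / ENNReal.ofReal |κ₄|))
        rwa [ENNReal.toReal_div, ENNReal.toReal_ofReal (by norm_num),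
          ENNReal.toReal_ofReal hpos.le] at this
      have := hnr.trans this
      rw [le_div_iff₀ hpos] at this
      linarith
  have ha : |Real.sqrt n * κ₃| ≤ 1/10 := by
    have : |Real.sqrt n * κ₃| = Real.sqrt ((n:ℝ) * κ₃ ^ 2) := by
      rw [abs_mul, abs_of_nonneg (Real.sqrt_nonneg _), Real.sqrt_mul (Nat.cast_nonneg n),
        Real.sqrt_sq_eq_abs]
    rw [this, show (1/10:ℝ) = Real.sqrt (1/100) by
      rw [show (1/100:ℝ) = (1/10)^2 by norm_num, Real.sqrt_sq (by norm_num)]]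
    exact Real.sqrt_le_sqrt hκ3
  have hb : |(n:ℝ) * κ₄| ≤ 1/100 := by
    rwa [abs_mul, abs_of_nonneg (Nat.cast_nonneg n)]
  obtain ⟨ha1, ha2⟩ := abs_le.mp ha
  obtain ⟨hb1, hb2⟩ := abs_le.mp hb
  -- nonnegativity
  have hp0 : 0 ≤ 1 / 12 + (-2 * Real.sqrt n * κ₃ + n * κ₄) / 24 := by nlinarith
  have hp1 : 0 ≤ 1 / 6 + (Real.sqrt n * κ₃ - n * κ₄) / 6 := by nlinarith
  have hp2 : 0 ≤ 1 / 2 + (n:ℝ) * κ₄ / 4 := by nlinarith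
  have hp3 : 0 ≤ 1 / 6 - (Real.sqrt n * κ₃ + n * κ₄) / 6 := by nlinarith
  have hp4 : 0 ≤ 1 / 12 + (2 * Real.sqrt n * κ₃ + n * κ₄) / 24 := by nlinarith
  have hsum1 : (1 / 12 + (-2 * Real.sqrt n * κ₃ + n * κ₄) / 24) +
      (1 / 6 + (Real.sqrt n * κ₃ - n * κ₄) / 6) + (1 / 2 + (n:ℝ) * κ₄ / 4) +
      (1 / 6 - (Real.sqrt n * κ₃ + n * κ₄) / 6) +
      (1 / 12 + (2 * Real.sqrt n * κ₃ + n * κ₄) / 24) = 1 := by ring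
  refine ⟨h1n, ⟨hp0, hp1, hp2, hp3, hp4⟩, hsum1, ?_⟩
  intro Ω _ P _ ξ hξ hA hB hC hD hE
  set v : Fin 5 → ℝ := ![(-2:ℝ), -1, 0, 1, 2] with hv
  set p : Fin 5 → ℝ := ![1 / 12 + (-2 * Real.sqrt n * κ₃ + n * κ₄) / 24,
    1 / 6 + (Real.sqrt n * κ₃ - n * κ₄) / 6, 1 / 2 + (n:ℝ) * κ₄ / 4,
    1 / 6 - (Real.sqrt n * κ₃ + n * κ₄) / 6,
    1 / 12 + (2 * Real.sqrt n * κ₃ + n * κ₄) / 24] with hp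
  have hvi : Function.Injective v := by
    intro i j hij
    fin_cases i <;> fin_cases j <;>
      first
        | rfl
        | (simp only [hv, Matrix.cons_val_zero, Matrix.cons_val_one, Matrix.head_cons,
             Matrix.cons_val_two, Matrix.tail_cons, Matrix.cons_val_three,
             Matrix.cons_val_four] at hij ; norm_num at hij)
  have hpnn : ∀ i, 0 ≤ p i := by
    intro i
    fin_cases i
    · exact hp0
    · exact hp1
    · exact hp2
    · exact hp3
    · exact hp4
  have hPi : ∀ i, P {ω | ξ ω = v i} = ENNReal.ofReal (p i) := by
    intro i
    fin_cases i
    · exact hA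
    · exact hB
    · exact hC
    · exact hD
    · exact hE
  have hps : ∑ i, p i = 1 := by
    rw [Fin.sum_univ_five]
    exact hsum1
  have key := integral_comp_of_five P ξ hξ v hvi p hpnn hPi hps
  have e1 := key (fun x => x)
  have e2 := key (fun x => x ^ 2)
  have e3 := key (fun x => x ^ 3)
  have e4 := key (fun x => x ^ 4)
  have e5 := key (fun x => |x| ^ 5)
  rw [Fin.sum_univ_five] at e1 e2 e3 e4 e5
  simp only [hv, hp, Matrix.cons_val_zero, Matrix.cons_val_one, Matrix.head_cons,
    Matrix.cons_val_two, Matrix.tail_cons, Matrix.cons_val_three, Matrix.cons_val_four] at e1 e2 e3 e4 e5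
  refine ⟨?_, ?_, ?_, ?_, ?_⟩
  · rw [e1]; ring
  · rw [e2]; ring
  · rw [e3]; ring
  · rw [e4]; ring
  · rw [e5]
    have h10 : (1:ℝ) / 12 + (-2 * Real.sqrt n * κ₃ + n * κ₄) / 24 ≤ 1 := by linarith
    have h11 : (1:ℝ) / 6 + (Real.sqrt n * κ₃ - n * κ₄) / 6 ≤ 1 := by linarith
    have h13 : (1:ℝ) / 6 - (Real.sqrt n * κ₃ + n * κ₄) / 6 ≤ 1 := by linarith
    have h14 : (1:ℝ) / 12 + (2 * Real.sqrt n * κ₃ + n * κ₄) / 24 ≤ 1 := by linarith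
    have h2' : (1:ℝ) / 2 + (n:ℝ) * κ₄ / 4 ≤ 1 := by linarith
    norm_num
    nlinarith
end
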